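/- arXiv:2311.00355 — 2 statements merged into one kernel-verified Lean document; each statement's English description precedes it below -/
import Mathlib

section
/- Let ℂ[ε] := ℂ[ε]/(ε²) be the ring of dual numbers over ℂ and let τ : ℂ[ε] → ℂ be the linear functional τ(x + yε) = y. Let g be the ℂ-vector space of finitely supported functions from ℤ² \ {(0,0)} to ℂ[ε] — writing w^{a,b}_γ for the function supported at (a,b) ∈ ℤ² \ {(0,0)} with value γ ∈ ℂ[ε] — together with two further basis vectors c_s and c_t. Then the bilinear bracket determined by [w^{a,b}_γ, w^{c,d}_η] = −(ad−bc)·w^{a+c,b+d}_{γη} + δ_{a+c,0}·δ_{b+d,0}·τ(γη)·(a·c_s + b·c_t) (the first term being interpreted as 0 when (a+c,b+d) = (0,0), which is automatic since its coefficient then vanishes) and by declaring c_s and c_t central is antisymmetric and satisfies the Jacobi identity; that is, this bracket makes g a Lie algebra over ℂ. -/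
/-- Index set `ℤ² \ {(0,0)}` for the generators `w^{a,b}_γ`. -/
abbrev GTEIdx : Type := {p : ℤ × ℤ // p ≠ 0}

/-- The underlying vector space of the (even part of the) Lie algebra `g_{T*E}`:
finitely supported functions `ℤ² \ {(0,0)} → ℂ[ε]` together with a two-dimensional
central part spanned by `c_s` and `c_t`. -/
abbrev GTE : Type := (GTEIdx →₀ DualNumber ℂ) × (ℂ × ℂ)

/-- The generator `w^{a,b}_γ`: the function supported at `(a,b)` with value `γ ∈ ℂ[ε]`. -/
noncomputable def wgen (p : GTEIdx) (γ : DualNumber ℂ) : GTE := (Finsupp.single p γ, 0)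

/-- The central element `c_s`. -/
def cs : GTE := (0, (1, 0))

/-- The central element `c_t`. -/
def ct : GTE := (0, (0, 1))

/-- The linear functional `τ(x + yε) = y` on the dual numbers. -/
def tauDN (x : DualNumber ℂ) : ℂ := TrivSqZeroExt.snd x

/-- The bilinear bracket determined by
`[w^{a,b}_γ, w^{c,d}_η] = −(ad−bc)·w^{a+c,b+d}_{γη} + δ_{a+c,0}·δ_{b+d,0}·τ(γη)·(a·c_s + b·c_t)`,
with `c_s` and `c_t` central; the first term is interpreted as `0` when `(a+c,b+d) = (0,0)`
(automatic, since its coefficient then vanishes). -/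
noncomputable def gteBracket (x y : GTE) : GTE :=
  ( x.1.sum fun a γ => y.1.sum fun b η =>
      if h : a.1 + b.1 ≠ 0 then
        Finsupp.single (⟨a.1 + b.1, h⟩ : GTEIdx)
          ((-(a.1.1 * b.1.2 - a.1.2 * b.1.1)) • (γ * η))
      else 0,
    x.1.sum fun a γ => y.1.sum fun b η =>
      if a.1 + b.1 = 0 then
        tauDN (γ * η) • (((a.1.1 : ℂ), (a.1.2 : ℂ)) : ℂ × ℂ)
      else 0 )


noncomputable section
namespace GTEaux

/-- cross product -/
def cr (a b : ℤ × ℤ) : ℤ := a.1 * b.2 - a.2 * b.1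

/-- single at a possibly-zero index -/
def msingle (s : ℤ × ℤ) (v : DualNumber ℂ) : GTEIdx →₀ DualNumber ℂ :=
  if h : s ≠ 0 then Finsupp.single (⟨s, h⟩ : GTEIdx) v else 0

lemma msingle_zero (s : ℤ × ℤ) : msingle s 0 = 0 := by
  unfold msingle; split_ifs <;> simp

lemma msingle_smul (n : ℤ) (s : ℤ × ℤ) (v : DualNumber ℂ) :
    n • msingle s v = msingle s (n • v) := by
  unfold msingle; split_ifs <;> simp

lemma msingle_add (s : ℤ × ℤ) (v w : DualNumber ℂ) :
    msingle s v + msingle s w = msingle s (v + w) := by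
  unfold msingle; split_ifs <;> simp

def F1 (a b : GTEIdx) (γ η : DualNumber ℂ) : GTEIdx →₀ DualNumber ℂ :=
  msingle (a.1 + b.1) ((-(cr a.1 b.1)) • (γ * η))

def F2 (a b : GTEIdx) (γ η : DualNumber ℂ) : ℂ × ℂ :=
  if a.1 + b.1 = 0 then tauDN (γ * η) • (((a.1.1 : ℂ), (a.1.2 : ℂ)) : ℂ × ℂ) else 0

lemma gteBracket_eq (x y : GTE) :
    gteBracket x y = (x.1.sum fun a γ => y.1.sum fun b η => F1 a b γ η,
                      x.1.sum fun a γ => y.1.sum fun b η => F2 a b γ η) := rfl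

end GTEaux
set_option synthInstance.maxHeartbeats 1000000
set_option maxHeartbeats 1000000
namespace GTEaux

lemma F1_zero_left (a b : GTEIdx) (η : DualNumber ℂ) : F1 a b 0 η = 0 := by
  simp [F1, msingle_zero]

lemma F1_zero_right (a b : GTEIdx) (γ : DualNumber ℂ) : F1 a b γ 0 = 0 := by
  simp [F1, msingle_zero]

lemma F1_add_left (a b : GTEIdx) (γ γ' η : DualNumber ℂ) :
    F1 a b (γ + γ') η = F1 a b γ η + F1 a b γ' η := by
  simp [F1, msingle_add, add_mul, smul_add]

lemma F1_add_right (a b : GTEIdx) (γ η η' : DualNumber ℂ) :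
    F1 a b γ (η + η') = F1 a b γ η + F1 a b γ η' := by
  simp [F1, msingle_add, mul_add, smul_add]

lemma F1_smul_left (c : ℂ) (a b : GTEIdx) (γ η : DualNumber ℂ) :
    F1 a b (c • γ) η = c • F1 a b γ η := by
  unfold F1 msingle
  split_ifs
  · rw [Finsupp.smul_single]
    congr 1
    rw [smul_mul_assoc, smul_comm]
  · simp

lemma F1_smul_right (c : ℂ) (a b : GTEIdx) (γ η : DualNumber ℂ) :
    F1 a b γ (c • η) = c • F1 a b γ η := by
  unfold F1 msingle
  split_ifs
  · rw [Finsupp.smul_single]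
    congr 1
    rw [mul_smul_comm, smul_comm]
  · simp

lemma F1_zsmul_right (n : ℤ) (a b : GTEIdx) (γ η : DualNumber ℂ) :
    F1 a b γ (n • η) = n • F1 a b γ η := by
  unfold F1 msingle
  split_ifs
  · rw [Finsupp.smul_single]
    congr 1
    rw [mul_smul_comm, smul_comm]
  · simp

lemma tauDN_zero : tauDN 0 = 0 := rfl

lemma F2_zero_left (a b : GTEIdx) (η : DualNumber ℂ) : F2 a b 0 η = 0 := by
  simp [F2, tauDN]

lemma F2_zero_right (a b : GTEIdx) (γ : DualNumber ℂ) : F2 a b γ 0 = 0 := by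
  simp [F2, tauDN]

lemma F2_add_left (a b : GTEIdx) (γ γ' η : DualNumber ℂ) :
    F2 a b (γ + γ') η = F2 a b γ η + F2 a b γ' η := by
  unfold F2
  split_ifs <;> simp [tauDN, add_mul, add_smul]

lemma F2_add_right (a b : GTEIdx) (γ η η' : DualNumber ℂ) :
    F2 a b γ (η + η') = F2 a b γ η + F2 a b γ η' := by
  unfold F2
  split_ifs <;> simp [tauDN, mul_add, add_smul]

lemma F2_smul_left (c : ℂ) (a b : GTEIdx) (γ η : DualNumber ℂ) :
    F2 a b (c • γ) η = c • F2 a b γ η := by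
  unfold F2
  split_ifs <;> simp [tauDN, smul_mul_assoc, mul_smul]

lemma F2_smul_right (c : ℂ) (a b : GTEIdx) (γ η : DualNumber ℂ) :
    F2 a b γ (c • η) = c • F2 a b γ η := by
  unfold F2
  split_ifs <;> simp [tauDN, mul_smul_comm, mul_smul]

lemma tauDN_zsmul (n : ℤ) (x : DualNumber ℂ) : tauDN (n • x) = n • tauDN x := by
  simp [tauDN]

lemma F2_zsmul_right (n : ℤ) (a b : GTEIdx) (γ η : DualNumber ℂ) :
    F2 a b γ (n • η) = n • F2 a b γ η := by
  unfold F2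
  split_ifs
  · rw [mul_smul_comm, tauDN_zsmul, smul_assoc]
  · simp

end GTEaux
namespace GTEaux

lemma br_add_left (x y z : GTE) :
    gteBracket (x + y) z = gteBracket x z + gteBracket y z := by
  simp only [gteBracket_eq, Prod.fst_add, Prod.mk_add_mk, Prod.mk.injEq]
  constructor
  · exact Finsupp.sum_add_index' (fun a => by simp [F1_zero_left, Finsupp.sum_fun_zero])
      (fun a b₁ b₂ => by simp [F1_add_left, Finsupp.sum_add])
  · exact Finsupp.sum_add_index' (fun a => by simp [F2_zero_left, Finsupp.sum_fun_zero])
      (fun a b₁ b₂ => by simp [F2_add_left, Finsupp.sum_add])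

lemma br_add_right (x y z : GTE) :
    gteBracket x (y + z) = gteBracket x y + gteBracket x z := by
  simp only [gteBracket_eq, Prod.fst_add, Prod.mk_add_mk, Prod.mk.injEq]
  constructor
  · rw [← Finsupp.sum_add]
    exact Finsupp.sum_congr fun a _ => Finsupp.sum_add_index'
      (fun b => F1_zero_right a b _) (fun b η η' => F1_add_right a b _ η η')
  · rw [← Finsupp.sum_add]
    exact Finsupp.sum_congr fun a _ => Finsupp.sum_add_index'
      (fun b => F2_zero_right a b _) (fun b η η' => F2_add_right a b _ η η')

lemma br_smul_left (c : ℂ) (x y : GTE) :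
    gteBracket (c • x) y = c • gteBracket x y := by
  simp only [gteBracket_eq, Prod.smul_fst, Prod.smul_mk, Prod.mk.injEq]
  constructor <;>
  · rw [Finsupp.sum_smul_index' (by intro i; simp [F1_zero_left, F2_zero_left, Finsupp.sum_fun_zero]),
      Finsupp.smul_sum]
    exact Finsupp.sum_congr fun a _ => by
      rw [Finsupp.smul_sum]
      exact Finsupp.sum_congr fun b _ => by
        first
        | exact F1_smul_left c a b _ _
        | exact F2_smul_left c a b _ _

lemma br_smul_right (c : ℂ) (x y : GTE) :
    gteBracket x (c • y) = c • gteBracket x y := by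
  simp only [gteBracket_eq, Prod.smul_fst, Prod.smul_mk, Prod.mk.injEq]
  constructor <;>
  · rw [Finsupp.smul_sum]
    refine Finsupp.sum_congr fun a _ => ?_
    rw [Finsupp.sum_smul_index' (by intro i; simp [F1_zero_right, F2_zero_right]),
      Finsupp.smul_sum]
    exact Finsupp.sum_congr fun b _ => by
      first
      | exact F1_smul_right c a b _ _
      | exact F2_smul_right c a b _ _

end GTEaux
namespace GTEaux

lemma br_zero_left (x y : GTE) (hx : x.1 = 0) : gteBracket x y = 0 := by
  simp [gteBracket_eq, hx, Finsupp.sum_zero_index, Prod.ext_iff]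

lemma br_zero_right (x y : GTE) (hy : y.1 = 0) : gteBracket x y = 0 := by
  simp [gteBracket_eq, hy, Finsupp.sum_zero_index, Finsupp.sum_fun_zero, Prod.ext_iff]

lemma br_wgen_pair (p : GTEIdx) (γ : DualNumber ℂ) (f : GTEIdx →₀ DualNumber ℂ) (c : ℂ × ℂ) :
    gteBracket (wgen p γ) (f, c) =
      (f.sum fun b η => F1 p b γ η, f.sum fun b η => F2 p b γ η) := by
  simp only [gteBracket_eq, wgen]
  rw [Finsupp.sum_single_index (by simp [F1_zero_left, Finsupp.sum_fun_zero]),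
    Finsupp.sum_single_index (by simp [F2_zero_left, Finsupp.sum_fun_zero])]

lemma br_single (p q : GTEIdx) (γ η : DualNumber ℂ) :
    gteBracket (wgen p γ) (wgen q η) = (F1 p q γ η, F2 p q γ η) := by
  rw [show wgen q η = ((Finsupp.single q η : GTEIdx →₀ DualNumber ℂ), (0 : ℂ × ℂ)) from rfl,
    br_wgen_pair,
    Finsupp.sum_single_index (h := fun b η => F1 p b γ η) (F1_zero_right p q γ),
    Finsupp.sum_single_index (h := fun b η => F2 p b γ η) (F2_zero_right p q γ)]

lemma F1_antisymm (a b : GTEIdx) (γ η : DualNumber ℂ) : F1 a b γ η = -F1 b a η γ := by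
  unfold F1 msingle
  have hc : b.1 + a.1 = a.1 + b.1 := add_comm _ _
  split_ifs with h1 h2 h2
  · have hpt : (⟨a.1 + b.1, h1⟩ : GTEIdx) = ⟨b.1 + a.1, h2⟩ := Subtype.ext hc.symm
    rw [hpt, ← Finsupp.single_neg]
    congr 1
    rw [mul_comm η γ, ← neg_smul]
    congr 1
    simp only [cr]
    ring
  · exact absurd (hc ▸ h1) h2
  · exact absurd (hc ▸ h2) h1
  · simp

lemma F2_antisymm (a b : GTEIdx) (γ η : DualNumber ℂ) : F2 a b γ η = -F2 b a η γ := by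
  unfold F2
  have hc : b.1 + a.1 = a.1 + b.1 := add_comm _ _
  rw [hc]
  split_ifs with h
  · have hb1 : (b.1.1 : ℂ) = -(a.1.1 : ℂ) := by
      have := congrArg Prod.fst h
      push_cast [Prod.fst_add] at this ⊢
      exact_mod_cast eq_neg_of_add_eq_zero_right (by exact_mod_cast this)
    have hb2 : (b.1.2 : ℂ) = -(a.1.2 : ℂ) := by
      have := congrArg Prod.snd h
      push_cast [Prod.snd_add] at this ⊢
      exact_mod_cast eq_neg_of_add_eq_zero_right (by exact_mod_cast this)
    rw [mul_comm η γ]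
    rw [hb1, hb2]
    simp only [Prod.smul_mk, Prod.neg_mk, Prod.mk.injEq, smul_eq_mul]
    constructor <;> ring
  · simp

end GTEaux
namespace GTEaux

lemma term_eq (p q r : GTEIdx) (γ η θ : DualNumber ℂ) :
    gteBracket (wgen p γ) (gteBracket (wgen q η) (wgen r θ)) =
      ( msingle (p.1 + q.1 + r.1) ((cr p.1 (q.1 + r.1) * cr q.1 r.1) • (γ * (η * θ))),
        if p.1 + q.1 + r.1 = 0 then
          (-(cr q.1 r.1)) • (tauDN (γ * (η * θ)) • (((p.1.1 : ℂ), (p.1.2 : ℂ)) : ℂ × ℂ))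
        else 0 ) := by
  rw [br_single, br_wgen_pair]
  by_cases h1 : q.1 + r.1 = 0
  · have hcr : cr q.1 r.1 = 0 := by
      have h2 : r.1 = -q.1 := eq_neg_of_add_eq_zero_right h1
      rw [h2]
      simp only [cr, Prod.fst_neg, Prod.snd_neg]
      ring
    have hF1 : F1 q r η θ = 0 := by
      unfold F1
      rw [hcr, neg_zero, zero_smul, msingle_zero]
    rw [hF1, Finsupp.sum_zero_index, Finsupp.sum_zero_index, hcr, mul_zero, zero_smul,
      msingle_zero, neg_zero, zero_smul]
    simp
  · have hF1 : F1 q r η θ =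
        Finsupp.single (⟨q.1 + r.1, h1⟩ : GTEIdx) ((-(cr q.1 r.1)) • (η * θ)) := by
      unfold F1 msingle
      rw [dif_pos h1]
    rw [hF1, Finsupp.sum_single_index (h := fun b η' => F1 p b γ η') (F1_zero_right _ _ _),
      Finsupp.sum_single_index (h := fun b η' => F2 p b γ η') (F2_zero_right _ _ _),
      F1_zsmul_right, F2_zsmul_right]
    simp only [Prod.mk.injEq]
    constructor
    · rw [show F1 p (⟨q.1 + r.1, h1⟩ : GTEIdx) γ (η * θ) =
          msingle (p.1 + (q.1 + r.1)) ((-(cr p.1 (q.1 + r.1))) • (γ * (η * θ))) from rfl,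
        msingle_smul, smul_smul, ← add_assoc,
        show (-(cr q.1 r.1)) * (-(cr p.1 (q.1 + r.1))) = cr p.1 (q.1 + r.1) * cr q.1 r.1 from
          by ring]
    · rw [show F2 p (⟨q.1 + r.1, h1⟩ : GTEIdx) γ (η * θ) =
          (if p.1 + (q.1 + r.1) = 0 then
            tauDN (γ * (η * θ)) • (((p.1.1 : ℂ), (p.1.2 : ℂ)) : ℂ × ℂ)
          else 0) from rfl, ← add_assoc]
      split_ifs with h
      · rfl
      · exact smul_zero _

end GTEaux
namespace GTEaux

/-- The Jacobi cyclic sum. -/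
noncomputable def jac (x y z : GTE) : GTE :=
  gteBracket x (gteBracket y z) + gteBracket y (gteBracket z x)
    + gteBracket z (gteBracket x y)

lemma jacobi_single (p q r : GTEIdx) (γ η θ : DualNumber ℂ) :
    jac (wgen p γ) (wgen q η) (wgen r θ) = 0 := by
  unfold jac
  rw [term_eq, term_eq, term_eq]
  have e1 : q.1 + r.1 + p.1 = p.1 + q.1 + r.1 := by ring
  have e2 : r.1 + p.1 + q.1 = p.1 + q.1 + r.1 := by ring
  have m1 : η * (θ * γ) = γ * (η * θ) := by ring
  have m2 : θ * (γ * η) = γ * (η * θ) := by ring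
  rw [e1, e2, m1, m2, Prod.mk_add_mk, Prod.mk_add_mk,
    show (0 : GTE) = ((0 : GTEIdx →₀ DualNumber ℂ), (0 : ℂ × ℂ)) from rfl]
  simp only [Prod.mk.injEq]
  constructor
  · rw [msingle_add, msingle_add, ← add_smul, ← add_smul,
      show cr p.1 (q.1 + r.1) * cr q.1 r.1 + cr q.1 (r.1 + p.1) * cr r.1 p.1
          + cr r.1 (p.1 + q.1) * cr p.1 q.1 = 0 from by
        simp only [cr, Prod.fst_add, Prod.snd_add]; ring,
      zero_smul, msingle_zero]
  · split_ifs with h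
    · have hz1 : (p.1.1 : ℂ) + q.1.1 + r.1.1 = 0 := by
        have := congrArg Prod.fst h
        simp only [Prod.fst_add, Prod.fst_zero] at this
        exact_mod_cast this
      have hz2 : (p.1.2 : ℂ) + q.1.2 + r.1.2 = 0 := by
        have := congrArg Prod.snd h
        simp only [Prod.snd_add, Prod.snd_zero] at this
        exact_mod_cast this
      have hr1 : (r.1.1 : ℂ) = -((p.1.1 : ℂ) + (q.1.1 : ℂ)) := by linear_combination hz1
      have hr2 : (r.1.2 : ℂ) = -((p.1.2 : ℂ) + (q.1.2 : ℂ)) := by linear_combination hz2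
      simp only [cr, Prod.smul_mk, smul_eq_mul, zsmul_eq_mul, Prod.mk_add_mk, Prod.mk.injEq]
      push_cast
      rw [hr1, hr2, show (0 : ℂ × ℂ) = ((0 : ℂ), (0 : ℂ)) from rfl, Prod.mk.injEq]
      constructor <;> ring
    · simp

end GTEaux
namespace GTEaux

lemma jac_cyc (x y z : GTE) : jac x y z = jac y z x := by
  unfold jac; abel

lemma jac_add_left (x x' y z : GTE) :
    jac (x + x') y z = jac x y z + jac x' y z := by
  unfold jac
  rw [br_add_left x x' (gteBracket y z), br_add_right z x x',
    br_add_right y (gteBracket z x) (gteBracket z x'), br_add_left x x' y,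
    br_add_right z (gteBracket x y) (gteBracket x' y)]
  abel

lemma jac_zero_left (x y z : GTE) (hx : x.1 = 0) : jac x y z = 0 := by
  unfold jac
  rw [br_zero_left x (gteBracket y z) hx, br_zero_right z x hx, br_zero_left x y hx,
    br_zero_right y 0 rfl, br_zero_right z 0 rfl]
  simp

lemma pair_split (p : GTEIdx) (γ : DualNumber ℂ) (f : GTEIdx →₀ DualNumber ℂ) :
    ((Finsupp.single p γ + f : GTEIdx →₀ DualNumber ℂ), (0 : ℂ × ℂ)) = wgen p γ + (f, 0) := by
  simp [wgen, Prod.mk_add_mk]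

lemma jac3 (p q : GTEIdx) (γ η : DualNumber ℂ) (h : GTEIdx →₀ DualNumber ℂ) :
    jac (wgen p γ) (wgen q η) (h, 0) = 0 := by
  induction h using Finsupp.induction with
  | zero =>
    have h0 := jac_zero_left ((0 : GTEIdx →₀ DualNumber ℂ), (0 : ℂ × ℂ))
      (wgen p γ) (wgen q η) rfl
    rw [jac_cyc] at h0
    exact h0
  | single_add r θ f _ _ ih =>
    rw [pair_split, jac_cyc, jac_cyc, jac_add_left, jacobi_single, jac_cyc, ih]
    simp

lemma jac2 (p : GTEIdx) (γ : DualNumber ℂ) (g h : GTEIdx →₀ DualNumber ℂ) :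
    jac (wgen p γ) (g, 0) (h, 0) = 0 := by
  induction g using Finsupp.induction with
  | zero =>
    have h0 := jac_zero_left ((0 : GTEIdx →₀ DualNumber ℂ), (0 : ℂ × ℂ))
      (h, (0 : ℂ × ℂ)) (wgen p γ) rfl
    rw [jac_cyc, jac_cyc] at h0
    exact h0
  | single_add q η f _ _ ih =>
    rw [pair_split, jac_cyc (wgen p γ), jac_add_left]
    rw [jac_cyc, jac_cyc, jac3, jac_cyc, jac_cyc, ih]
    simp

lemma jac_all (x y z : GTE) : jac x y z = 0 := by
  have key : ∀ f g h : GTEIdx →₀ DualNumber ℂ, jac (f, 0) (g, 0) (h, 0) = 0 := by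
    intro f g h
    induction f using Finsupp.induction with
    | zero => exact jac_zero_left _ _ _ rfl
    | single_add p γ f _ _ ih => rw [pair_split, jac_add_left, jac2, ih, add_zero]
  exact key x.1 y.1 z.1

/-- antisymmetrized bracket -/
noncomputable def asym (x y : GTE) : GTE := gteBracket x y + gteBracket y x

lemma asym_comm (x y : GTE) : asym x y = asym y x := by unfold asym; abel

lemma asym_add_left (x x' y : GTE) : asym (x + x') y = asym x y + asym x' y := by
  unfold asym
  rw [br_add_left, br_add_right]
  abel

lemma asym_zero_left (x y : GTE) (hx : x.1 = 0) : asym x y = 0 := by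
  unfold asym
  rw [br_zero_left x y hx, br_zero_right y x hx, add_zero]

lemma asym_single (p q : GTEIdx) (γ η : DualNumber ℂ) : asym (wgen p γ) (wgen q η) = 0 := by
  unfold asym
  rw [br_single, br_single, F1_antisymm, F2_antisymm, Prod.mk_add_mk]
  simp [Prod.ext_iff]

lemma asym2 (p : GTEIdx) (γ : DualNumber ℂ) (g : GTEIdx →₀ DualNumber ℂ) :
    asym (wgen p γ) (g, 0) = 0 := by
  induction g using Finsupp.induction with
  | zero => rw [asym_comm]; exact asym_zero_left _ _ rfl
  | single_add q η f _ _ ih =>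
    rw [pair_split, asym_comm, asym_add_left, asym_comm, asym_single, asym_comm, ih]
    simp

lemma asym_all (x y : GTE) : asym x y = 0 := by
  have key : ∀ f g : GTEIdx →₀ DualNumber ℂ, asym (f, 0) (g, 0) = 0 := by
    intro f g
    induction f using Finsupp.induction with
    | zero => exact asym_zero_left _ _ rfl
    | single_add p γ f _ _ ih => rw [pair_split, asym_add_left, asym2, ih, add_zero]
  exact key x.1 y.1

end GTEaux

/-- The bracket on `g_{T*E}` is `ℂ`-bilinear, antisymmetric and satisfies the Jacobi
identity; that is, it makes `g_{T*E}` a Lie algebra over `ℂ`. -/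
theorem gteBracket_isLieAlgebra :
    (∀ x y z : GTE, gteBracket (x + y) z = gteBracket x z + gteBracket y z) ∧
    (∀ x y z : GTE, gteBracket x (y + z) = gteBracket x y + gteBracket x z) ∧
    (∀ (c : ℂ) (x y : GTE), gteBracket (c • x) y = c • gteBracket x y) ∧
    (∀ (c : ℂ) (x y : GTE), gteBracket x (c • y) = c • gteBracket x y) ∧
    (∀ x y : GTE, gteBracket x y = -gteBracket y x) ∧
    (∀ x y z : GTE,
      gteBracket x (gteBracket y z) + gteBracket y (gteBracket z x)
        + gteBracket z (gteBracket x y) = 0) := by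
  refine ⟨GTEaux.br_add_left, GTEaux.br_add_right, GTEaux.br_smul_left, GTEaux.br_smul_right,
    ?_, ?_⟩
  · intro x y
    have h := GTEaux.asym_all x y
    unfold GTEaux.asym at h
    exact add_eq_zero_iff_eq_neg.mp h
  · intro x y z
    have h := GTEaux.jac_all x y z
    unfold GTEaux.jac at h
    exact h
end
end

section
/- Let k be a field, n ≥ 0, let J ∈ M_{n+1}(k) be the nilpotent Jordan block with J_{i,i+1} = 1 for 1 ≤ i ≤ n and all other entries 0, and let A = diag(A₀, …, A_n) be diagonal. Then the block matrix M = (J A; 0 J) ∈ M_{2(n+1)}(k) is similar to the block-diagonal matrix (J 0; 0 J) if and only if A₀ + A₁ + ⋯ + A_n = 0. -/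
/-- The `(n+1) × (n+1)` nilpotent Jordan block `J`, with `J_{i,i+1} = 1` and all
other entries `0`. -/
def jordanNilBlock (k : Type*) [Field k] (n : ℕ) :
    Matrix (Fin (n + 1)) (Fin (n + 1)) k :=
  Matrix.of fun i j => if (i : ℕ) + 1 = (j : ℕ) then 1 else 0

section Aux

open Matrix Finset

variable {k : Type*} [Field k] {n : ℕ}

def Fsum (A : Fin (n + 1) → k) (i j : ℕ) : k :=
  ∑ t : Fin (n + 1), if i ≤ (t : ℕ) ∧ (t : ℕ) ≤ j then A t else 0

lemma Fsum_empty (A : Fin (n + 1) → k) {i j : ℕ} (h : j < i) : Fsum A i j = 0 := by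
  refine Finset.sum_eq_zero fun t _ => ?_
  rw [if_neg]; omega

lemma Fsum_diag (A : Fin (n + 1) → k) (i : Fin (n + 1)) : Fsum A i i = A i := by
  rw [Fsum, Finset.sum_eq_single i]
  · simp
  · intro t _ ht
    rw [if_neg]
    intro ⟨h1, h2⟩
    exact ht (Fin.ext (le_antisymm h2 h1))
  · simp

lemma Fsum_step (A : Fin (n + 1) → k) (i : ℕ) (j : Fin n) (h : i ≤ (j : ℕ) + 1) :
    Fsum A i ((j : ℕ) + 1) = Fsum A i (j : ℕ) + A j.succ := by
  have key : ∀ t : Fin (n + 1),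
      (if i ≤ (t : ℕ) ∧ (t : ℕ) ≤ (j : ℕ) + 1 then A t else 0)
        = (if i ≤ (t : ℕ) ∧ (t : ℕ) ≤ (j : ℕ) then A t else 0)
          + (if t = j.succ then A t else 0) := by
    intro t
    by_cases ht : t = j.succ
    · subst ht
      simp [Fin.val_succ, h]
    · have htv : (t : ℕ) ≠ (j : ℕ) + 1 := fun e => ht (Fin.ext (by simp [e]))
      rw [if_neg ht, add_zero]
      have : (i ≤ (t : ℕ) ∧ (t : ℕ) ≤ (j : ℕ) + 1) ↔ (i ≤ (t : ℕ) ∧ (t : ℕ) ≤ (j : ℕ)) := by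
        omega
      simp only [this]
  rw [Fsum, Finset.sum_congr rfl fun t _ => key t, Finset.sum_add_distrib]
  congr 1
  simp

lemma Fsum_full (A : Fin (n + 1) → k) : Fsum A 0 n = ∑ i, A i := by
  refine Finset.sum_congr rfl fun t _ => ?_
  rw [if_pos ⟨Nat.zero_le _, Fin.is_le t⟩]

section JLemmas
local notation "J" => jordanNilBlock k n

lemma sumJ_right_zero (f : Fin (n + 1) → k) : ∑ c, f c * J c 0 = 0 := by
  refine Finset.sum_eq_zero fun c _ => ?_
  simp [jordanNilBlock]

lemma sumJ_right_succ (f : Fin (n + 1) → k) (j : Fin n) :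
    ∑ c, f c * J c j.succ = f j.castSucc := by
  rw [Finset.sum_eq_single j.castSucc]
  · simp [jordanNilBlock]
  · intro c _ hc
    rw [jordanNilBlock, Matrix.of_apply, if_neg, mul_zero]
    intro e
    exact hc (Fin.ext (by simp at e ⊢; omega))
  · simp

lemma sumJ_left_last (f : Fin (n + 1) → k) : ∑ c, J (Fin.last n) c * f c = 0 := by
  refine Finset.sum_eq_zero fun c _ => ?_
  rw [jordanNilBlock, Matrix.of_apply, if_neg, zero_mul]
  have := c.is_le
  simp; omega

lemma sumJ_left_castSucc (f : Fin (n + 1) → k) (i : Fin n) :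
    ∑ c, J i.castSucc c * f c = f i.succ := by
  rw [Finset.sum_eq_single i.succ]
  · simp [jordanNilBlock]
  · intro c _ hc
    rw [jordanNilBlock, Matrix.of_apply, if_neg, zero_mul]
    intro e
    exact hc (Fin.ext (by simp at e ⊢; omega))
  · simp

end JLemmas

def Bmat (A : Fin (n + 1) → k) : Matrix (Fin (n + 1)) (Fin (n + 1)) k :=
  Matrix.of fun i j => if (j : ℕ) + 1 = (i : ℕ) then Fsum A 0 (j : ℕ) else 0

lemma key1 (A : Fin (n + 1) → k) (h : ∑ i, A i = 0) :
    Matrix.diagonal A + Bmat A * jordanNilBlock k n = jordanNilBlock k n * Bmat A := by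
  have hfull : Fsum A 0 n = 0 := (Fsum_full A).trans h
  ext i j
  rw [Matrix.add_apply, Matrix.mul_apply, Matrix.mul_apply, Matrix.diagonal_apply]
  induction i using Fin.lastCases with
  | last =>
    rw [sumJ_left_last]
    induction j using Fin.cases with
    | zero =>
      rw [show ∑ c, Bmat A (Fin.last n) c * jordanNilBlock k n c 0 = 0 from
        sumJ_right_zero _, add_zero]
      split_ifs with hl
      · have hn : n = 0 := by simpa [Fin.ext_iff] using hl
        subst hn
        simpa using h
      · rfl
    | succ j' =>
      rw [show ∑ c, Bmat A (Fin.last n) c * jordanNilBlock k n c j'.succ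
          = Bmat A (Fin.last n) j'.castSucc from sumJ_right_succ _ _]
      simp only [Bmat, Matrix.of_apply, Fin.coe_castSucc, Fin.val_last]
      by_cases hc : (j' : ℕ) + 1 = n
      · rw [if_pos hc, if_pos (Fin.ext (by simp [hc]) : Fin.last n = j'.succ)]
        have := Fsum_step A 0 j' (by omega)
        rw [hc] at this
        have hA : A (Fin.last n) = A j'.succ := by
          congr 1; exact Fin.ext (by simp [hc])
        rw [hA]
        linear_combination hfull - this
      · rw [if_neg hc, if_neg (fun e : Fin.last n = j'.succ => hc (by
          have := congrArg Fin.val e; simp at this; omega)), add_zero]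
  | cast i' =>
    rw [sumJ_left_castSucc]
    induction j using Fin.cases with
    | zero =>
      rw [show ∑ c, Bmat A i'.castSucc c * jordanNilBlock k n c 0 = 0 from
        sumJ_right_zero _, add_zero]
      simp only [Bmat, Matrix.of_apply, Fin.val_succ, Fin.val_zero]
      by_cases hc : (i' : ℕ) = 0
      · rw [if_pos (Fin.ext (by simp [hc]) : i'.castSucc = 0)]
        have h2 : 0 + 1 = (i' : ℕ) + 1 := by omega
        refine Eq.trans ?_ (if_pos h2).symm
        have : Fsum A 0 0 = A 0 := Fsum_diag A 0
        rw [this]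
        congr 1
        exact Fin.ext (by simp [hc])
      · rw [if_neg (fun e : i'.castSucc = 0 => hc (by
          have := congrArg Fin.val e; simpa using this))]
        have h2 : ¬ 0 + 1 = (i' : ℕ) + 1 := by omega
        exact (if_neg h2).symm
    | succ j' =>
      rw [show ∑ c, Bmat A i'.castSucc c * jordanNilBlock k n c j'.succ
          = Bmat A i'.castSucc j'.castSucc from sumJ_right_succ _ _]
      simp only [Bmat, Matrix.of_apply, Fin.coe_castSucc, Fin.val_succ]
      by_cases hc : (j' : ℕ) + 1 = (i' : ℕ)
      · rw [if_pos hc, if_pos (by omega : (j' : ℕ) + 1 + 1 = (i' : ℕ) + 1),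
          if_pos (Fin.ext (by simp; omega) : i'.castSucc = j'.succ)]
        have hstep := Fsum_step A 0 j' (by omega)
        have hA : A i'.castSucc = A j'.succ := by
          congr 1; exact Fin.ext (by simp; omega)
        rw [hA, hstep]
        ring
      · rw [if_neg hc, if_neg (by omega : ¬ (j' : ℕ) + 1 + 1 = (i' : ℕ) + 1),
          if_neg (fun e : i'.castSucc = j'.succ => hc (by
            have := congrArg Fin.val e; simp at this; omega)), add_zero]

lemma sum_diag_right (f : Fin (n + 1) → k) (A : Fin (n + 1) → k) (j : Fin (n + 1)) :
    ∑ c, f c * Matrix.diagonal A c j = f j * A j := by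
  rw [Finset.sum_eq_single j]
  · rw [Matrix.diagonal_apply_eq]
  · intro c _ hc
    rw [Matrix.diagonal_apply_ne _ hc, mul_zero]
  · simp

lemma powM (A : Fin (n + 1) → k) (m : ℕ) :
    (Matrix.fromBlocks (jordanNilBlock k n) (Matrix.diagonal A) 0 (jordanNilBlock k n)) ^ m
      = Matrix.of fun p q =>
        match p, q with
        | Sum.inl i, Sum.inl j => if (i : ℕ) + m = (j : ℕ) then (1 : k) else 0
        | Sum.inl i, Sum.inr j => if (i : ℕ) + m = (j : ℕ) + 1 then Fsum A (i : ℕ) (j : ℕ) else 0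
        | Sum.inr _, Sum.inl _ => 0
        | Sum.inr i, Sum.inr j => if (i : ℕ) + m = (j : ℕ) then 1 else 0 := by
  induction m with
  | zero =>
    rw [pow_zero]
    ext p q
    rcases p with i | i <;> rcases q with j | j <;>
        simp only [Matrix.of_apply, Matrix.one_apply, Nat.add_zero, Sum.inl.injEq,
          Sum.inr.injEq, Fin.ext_iff, reduceCtorEq, if_false]
    · split_ifs with h
      · exact (Fsum_empty A (by omega)).symm
      · rfl
  | succ m ih =>
    rw [pow_succ, ih]
    ext p q
    rcases p with i | i <;> rcases q with j | j <;>
      simp only [Matrix.mul_apply, Fintype.sum_sum_type, Matrix.of_apply,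
        Matrix.fromBlocks_apply₁₁, Matrix.fromBlocks_apply₁₂, Matrix.fromBlocks_apply₂₁,
        Matrix.fromBlocks_apply₂₂, Matrix.zero_apply, mul_zero, zero_mul,
        Finset.sum_const_zero, add_zero, zero_add]
    · -- (inl i, inl j)
      induction j using Fin.cases with
      | zero => rw [sumJ_right_zero, if_neg (by simp only [Fin.val_zero]; omega)]
      | succ j' =>
        rw [sumJ_right_succ]
        exact if_congr (by simp only [Fin.val_succ, Fin.coe_castSucc]; omega) rfl rfl
    · -- (inl i, inr j)
      rw [sum_diag_right]
      induction j using Fin.cases with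
      | zero =>
        rw [sumJ_right_zero, add_zero, Fin.val_zero]
        by_cases hc : (i : ℕ) + m = 0
        · rw [if_pos hc, if_pos (by omega), one_mul]
          have hi : i = 0 := Fin.ext (by simp only [Fin.val_zero]; omega)
          subst hi
          simpa using (Fsum_diag A 0).symm
        · rw [if_neg hc, if_neg (by omega), zero_mul]
      | succ j' =>
        rw [sumJ_right_succ, Fin.val_succ, Fin.coe_castSucc]
        by_cases hc : (i : ℕ) + m = (j' : ℕ) + 1
        · rw [if_pos hc, if_pos hc, if_pos (by omega), one_mul,
            Fsum_step A (i : ℕ) j' (by omega)]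
          ring
        · rw [if_neg hc, if_neg hc, if_neg (by omega), zero_mul, add_zero]
    · -- (inr i, inr j)
      induction j using Fin.cases with
      | zero => rw [sumJ_right_zero, if_neg (by simp only [Fin.val_zero]; omega)]
      | succ j' =>
        rw [sumJ_right_succ]
        exact if_congr (by simp only [Fin.val_succ, Fin.coe_castSucc]; omega) rfl rfl

end Aux

/-- The block matrix `M = (J A; 0 J)`, with `J` the nilpotent Jordan block and
`A = diag(A₀, …, A_n)`, is similar to the block-diagonal matrix `(J 0; 0 J)` if and
only if `A₀ + A₁ + ⋯ + A_n = 0`. -/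
theorem jordan_block_extension_splits_iff {k : Type*} [Field k] (n : ℕ)
    (A : Fin (n + 1) → k) :
    IsConj
        (Matrix.fromBlocks (jordanNilBlock k n) (Matrix.diagonal A) 0 (jordanNilBlock k n))
        (Matrix.fromBlocks (jordanNilBlock k n) 0 0 (jordanNilBlock k n))
      ↔ ∑ i, A i = 0 := by
  constructor
  · rintro ⟨u, hu⟩
    have hp := hu.pow_right (n + 1)
    have hN : (Matrix.fromBlocks (jordanNilBlock k n) 0 0 (jordanNilBlock k n)
        : Matrix _ _ k) ^ (n + 1) = 0 := by
      have hz : Matrix.diagonal (0 : Fin (n + 1) → k)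
          = (0 : Matrix (Fin (n + 1)) (Fin (n + 1)) k) := Matrix.diagonal_zero
      have hstep : (Matrix.fromBlocks (jordanNilBlock k n) 0 0 (jordanNilBlock k n)
            : Matrix _ _ k) ^ (n + 1)
          = (Matrix.fromBlocks (jordanNilBlock k n)
              (Matrix.diagonal (0 : Fin (n + 1) → k)) 0 (jordanNilBlock k n)) ^ (n + 1) := by
        rw [hz]
      rw [hstep, powM]
      ext p q
      rcases p with i | i <;> rcases q with j | j <;>
        simp only [Matrix.of_apply, Matrix.zero_apply]
      · rw [if_neg (by have := j.is_le; omega)]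
      · rw [if_congr Iff.rfl (by simp [Fsum] : Fsum (0 : Fin (n+1) → k) (i:ℕ) (j:ℕ) = 0) rfl,
          ite_self]
      · rw [if_neg (by have := j.is_le; omega)]
    have hpe := hp.eq
    rw [hN, zero_mul] at hpe
    have hM : (Matrix.fromBlocks (jordanNilBlock k n) (Matrix.diagonal A) 0
        (jordanNilBlock k n)) ^ (n + 1) = 0 := by
      calc _ = (↑u⁻¹ : Matrix _ _ k) * (↑u * (Matrix.fromBlocks (jordanNilBlock k n)
            (Matrix.diagonal A) 0 (jordanNilBlock k n)) ^ (n + 1)) := by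
              rw [← mul_assoc, Units.inv_mul, one_mul]
        _ = 0 := by rw [hpe, mul_zero]
    rw [powM] at hM
    have he := congrFun (congrFun hM (Sum.inl 0)) (Sum.inr (Fin.last n))
    simp only [Matrix.of_apply, Matrix.zero_apply, Fin.val_zero, Fin.val_last] at he
    simp only [if_pos (show 0 + (n + 1) = n + 1 by omega), Fsum_full] at he
    exact he
  · intro h
    refine ⟨⟨Matrix.fromBlocks 1 (Bmat A) 0 1, Matrix.fromBlocks 1 (-(Bmat A)) 0 1, ?_, ?_⟩, ?_⟩
    · rw [Matrix.fromBlocks_multiply]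
      simp [← Matrix.fromBlocks_one]
    · rw [Matrix.fromBlocks_multiply]
      simp [← Matrix.fromBlocks_one]
    · show Matrix.fromBlocks 1 (Bmat A) 0 1 * _ = _ * Matrix.fromBlocks 1 (Bmat A) 0 1
      rw [Matrix.fromBlocks_multiply, Matrix.fromBlocks_multiply, ← key1 A h]
      simp
end
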